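/- arXiv:0901.2866 — 3 statements merged into one kernel-verified Lean document; each statement's English description precedes it below -/
import Mathlib

section
/- For every nonzero complex number z with z + z̄ ≠ 0, Σ_{n,m≥0} zⁿ(−z̄)^m/(n+m)! = (z·e^z + z̄·e^{−z̄})/(z + z̄). -/
open Complex in
/-- `Σ_{n,m≥0} zⁿ(-z̄)^m/(n+m)! = (z e^z + z̄ e^{-z̄})/(z + z̄)` for `z ≠ 0`, `z + z̄ ≠ 0`. -/
theorem double_series_exp_eval (z : ℂ) (hz : z ≠ 0) (hzz : z + starRingEnd ℂ z ≠ 0) :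
    HasSum (fun p : ℕ × ℕ =>
        z ^ p.1 * (-(starRingEnd ℂ z)) ^ p.2 / (p.1 + p.2).factorial)
      ((z * Complex.exp z + starRingEnd ℂ z * Complex.exp (-(starRingEnd ℂ z))) /
        (z + starRingEnd ℂ z)) := by
  set w : ℂ := -(starRingEnd ℂ z) with hw
  set f : ℕ × ℕ → ℂ := fun p => z ^ p.1 * w ^ p.2 / (p.1 + p.2).factorial with hf
  have hzw : z - w ≠ 0 := by rw [hw, sub_neg_eq_add]; exact hzz
  -- Summability
  have h1 : Summable (fun n : ℕ => ‖z‖ ^ n / n.factorial) :=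
    Real.summable_pow_div_factorial ‖z‖
  have h2 : Summable (fun n : ℕ => ‖w‖ ^ n / n.factorial) :=
    Real.summable_pow_div_factorial ‖w‖
  have hprod : Summable (fun p : ℕ × ℕ =>
      (‖z‖ ^ p.1 / p.1.factorial) * (‖w‖ ^ p.2 / p.2.factorial)) :=
    h1.mul_of_nonneg h2 (fun n => by positivity) (fun n => by positivity)
  have hsummable : Summable f := by
    refine Summable.of_norm (hprod.of_nonneg_of_le (fun p => norm_nonneg _) fun p => ?_)
    have hfac : ((p.1.factorial : ℝ) * p.2.factorial) ≤ (p.1 + p.2).factorial := by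
      exact_mod_cast Nat.le_of_dvd (Nat.factorial_pos _)
        (Nat.factorial_mul_factorial_dvd_factorial_add _ _)
    have : ‖f p‖ = ‖z‖ ^ p.1 * ‖w‖ ^ p.2 / (p.1 + p.2).factorial := by
      simp [hf, norm_div, norm_mul, norm_pow, Complex.norm_natCast]
    rw [this, div_mul_div_comm]
    gcongr
  -- Sum along antidiagonals
  set g : ℕ → ℂ := fun k =>
    (z * (z ^ k / k.factorial) - w * (w ^ k / k.factorial)) / (z - w) with hg
  have hfib : ∀ k : ℕ, HasSum (fun p : (Finset.HasAntidiagonal.antidiagonal k : Finset (ℕ × ℕ)) => f p) (g k) := by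
    intro k
    have h0 := hasSum_fintype (fun p : (Finset.HasAntidiagonal.antidiagonal k : Finset (ℕ × ℕ)) => f p)
    rw [Finset.sum_coe_sort] at h0
    convert h0 using 1
    have hstep : ∑ p ∈ Finset.HasAntidiagonal.antidiagonal k, f p
        = (∑ p ∈ Finset.HasAntidiagonal.antidiagonal k, z ^ p.1 * w ^ p.2) / k.factorial := by
      rw [Finset.sum_div]
      refine Finset.sum_congr rfl fun p hp => ?_
      rw [Finset.HasAntidiagonal.mem_antidiagonal] at hp
      rw [hf]
      simp only [hp]
    have hgeom : ∑ p ∈ Finset.HasAntidiagonal.antidiagonal k, z ^ p.1 * w ^ p.2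
        = (z ^ (k + 1) - w ^ (k + 1)) / (z - w) := by
      rw [Finset.Nat.sum_antidiagonal_eq_sum_range_succ_mk]
      rw [eq_div_iff hzw, ← geom_sum₂_mul z w (k + 1)]
      congr 1
    have hk : (k.factorial : ℂ) ≠ 0 := by exact_mod_cast k.factorial_pos.ne'
    rw [hstep, hgeom, hg]
    field_simp
    ring
  have hsigma : HasSum (f ∘ Finset.HasAntidiagonal.sigmaAntidiagonalEquivProd) (∑' p, f p) :=
    Finset.HasAntidiagonal.sigmaAntidiagonalEquivProd.hasSum_iff.mpr hsummable.hasSum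
  have hG : HasSum g (∑' p, f p) := hsigma.sigma hfib
  -- Evaluate the sum of g
  have hez : HasSum (fun k : ℕ => z ^ k / k.factorial) (Complex.exp z) := by
    rw [Complex.exp_eq_exp_ℂ]; exact NormedSpace.expSeries_div_hasSum_exp z
  have hew : HasSum (fun k : ℕ => w ^ k / k.factorial) (Complex.exp w) := by
    rw [Complex.exp_eq_exp_ℂ]; exact NormedSpace.expSeries_div_hasSum_exp w
  have hG' : HasSum g ((z * Complex.exp z - w * Complex.exp w) / (z - w)) :=
    ((hez.mul_left z).sub (hew.mul_left w)).div_const (z - w)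
  have hval : (∑' p, f p)
      = (z * Complex.exp z + starRingEnd ℂ z * Complex.exp (-(starRingEnd ℂ z))) /
        (z + starRingEnd ℂ z) := by
    rw [hG.unique hG', hw, sub_neg_eq_add, neg_mul, sub_neg_eq_add]
  rw [← hval]
  exact hsummable.hasSum
end

section
/- For every natural number n and real x, the Hermite polynomial admits the integral representation H_n(x) = (−2i)^n · ∫_{−∞}^{∞} e^{−(t−ix)²} tⁿ dt / √π. -/
/-- Physicists' Hermite polynomials, `H_n(x) = (-1)^n e^{x²} (d/dx)^n e^{-x²}`. -/
noncomputable def physHermite (n : ℕ) (x : ℝ) : ℝ :=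
  (-1) ^ n * Real.exp (x ^ 2) * iteratedDeriv n (fun y : ℝ => Real.exp (-y ^ 2)) x


open Real MeasureTheory Complex
open scoped FourierTransform

noncomputable def fC : ℝ → ℂ := fun t => Complex.exp (-(t : ℂ) ^ 2)

lemma fC_eq (t : ℝ) : fC t = ((Real.exp (-t ^ 2) : ℝ) : ℂ) := by
  simp only [fC, Complex.ofReal_exp]
  norm_cast

lemma fC_contDiff : ContDiff ℝ ⊤ fC :=
  ((Complex.ofRealCLM.contDiff.pow 2).neg).cexp

lemma gR_contDiff : ContDiff ℝ ⊤ (fun y : ℝ => Real.exp (-y ^ 2)) :=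
  Real.contDiff_exp.comp ((contDiff_id.pow 2).neg)

lemma iteratedDeriv_fC (n : ℕ) (x : ℝ) :
    iteratedDeriv n fC x
      = ((iteratedDeriv n (fun y : ℝ => Real.exp (-y ^ 2)) x : ℝ) : ℂ) := by
  have h : fC = Complex.ofRealCLM ∘ (fun y : ℝ => Real.exp (-y ^ 2)) := funext fC_eq
  rw [h, iteratedDeriv, iteratedDeriv,
    Complex.ofRealCLM.iteratedFDeriv_comp_left (x := x) gR_contDiff.contDiffAt le_top]
  simp

lemma integrable_pow_fC (k : ℕ) : Integrable (fun t : ℝ => t ^ k • fC t) := by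
  have h1 : Integrable (fun t : ℝ => t ^ k * Real.exp (-t ^ 2)) := by
    have := integrable_rpow_mul_exp_neg_mul_sq (b := 1) one_pos
      (s := k) (lt_of_lt_of_le neg_one_lt_zero (Nat.cast_nonneg k))
    simpa [Real.rpow_natCast] using this
  refine (Complex.ofRealCLM.integrable_comp h1).congr
    (Filter.Eventually.of_forall fun t => ?_)
  simp only [Function.comp, Complex.ofRealCLM_apply, fC_eq, Complex.real_smul]
  push_cast
  ring

lemma fourier_fC : 𝓕 fC = fun w : ℝ => (Real.sqrt π : ℂ) • fC (-π * w) := by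
  have hπ : ((π : ℝ) : ℂ) ≠ 0 := by exact_mod_cast Real.pi_ne_zero
  have hb : (0:ℝ) < (((π⁻¹ : ℝ) : ℂ)).re := by
    simp [Real.pi_pos]
  have h := fourier_gaussian_pi (b := ((π⁻¹ : ℝ) : ℂ)) hb
  have hfun : (fun x : ℝ => Complex.exp (-π * ((π⁻¹ : ℝ) : ℂ) * (x:ℂ) ^ 2)) = fC := by
    funext t
    have h1 : (-(π:ℂ) * ((π⁻¹ : ℝ) : ℂ)) = -1 := by
      push_cast
      rw [neg_mul, mul_inv_cancel₀ hπ]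
    rw [show (-↑π * ((π⁻¹ : ℝ) : ℂ) * (t:ℂ) ^ 2) = (-(π:ℂ) * ((π⁻¹ : ℝ) : ℂ)) * (t:ℂ)^2 by ring,
      h1, fC]
    ring_nf
  rw [hfun] at h
  rw [h]
  funext w
  have h2 : (1 : ℂ) / (((π⁻¹ : ℝ) : ℂ)) ^ (1/2 : ℂ) = (Real.sqrt π : ℂ) := by
    have h3 : ((π⁻¹ : ℝ)) ^ ((1:ℝ)/2) = (Real.sqrt π)⁻¹ := by
      rw [Real.inv_rpow Real.pi_pos.le, ← Real.sqrt_eq_rpow]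
    rw [show ((1:ℂ)/2) = (((1:ℝ)/2 : ℝ) : ℂ) by norm_num,
      ← Complex.ofReal_cpow (by positivity) ((1:ℝ)/2), h3]
    push_cast
    rw [one_div, inv_inv]
  rw [h2, smul_eq_mul]
  congr 1
  simp only [fC]
  congr 1
  push_cast
  field_simp

theorem physHermite_integral_repr' (n : ℕ) (x : ℝ) :
    (((-1 : ℝ) ^ n * Real.exp (x ^ 2) *
        iteratedDeriv n (fun y : ℝ => Real.exp (-y ^ 2)) x : ℝ) : ℂ) =
      (-2 * Complex.I) ^ n *
        (∫ t : ℝ, Complex.exp (-((t : ℂ) - Complex.I * x) ^ 2) * (t : ℂ) ^ n) /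
        (Real.sqrt π : ℝ) := by
  have hπ : (π : ℝ) ≠ 0 := Real.pi_ne_zero
  have hπC : ((π : ℝ) : ℂ) ≠ 0 := by exact_mod_cast hπ
  set D : ℂ := ((iteratedDeriv n (fun y : ℝ => Real.exp (-y ^ 2)) x : ℝ) : ℂ) with hD
  set J : ℂ := ∫ t : ℝ, Complex.exp (-((t : ℂ) - Complex.I * x) ^ 2) * (t : ℂ) ^ n with hJ
  set K : ℂ := ∫ t : ℝ, Complex.exp (((2 * t * x : ℝ) : ℂ) * Complex.I)
      * ((t : ℂ) ^ n * fC t) with hK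
  have claim1 : J = Complex.exp ((x : ℂ) ^ 2) * K := by
    rw [hJ, hK, ← MeasureTheory.integral_const_mul]
    refine integral_congr_ae (Filter.Eventually.of_forall fun t => ?_)
    simp only [fC]
    rw [show Complex.exp ((x:ℂ)^2) * (Complex.exp (((2*t*x:ℝ):ℂ) * Complex.I)
          * ((t:ℂ)^n * Complex.exp (-(t:ℂ)^2)))
        = (Complex.exp ((x:ℂ)^2) * Complex.exp (((2*t*x:ℝ):ℂ) * Complex.I)
          * Complex.exp (-(t:ℂ)^2)) * (t:ℂ)^n by ring,
      ← Complex.exp_add, ← Complex.exp_add]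
    congr 2
    push_cast
    ring_nf
    rw [Complex.I_sq]
    ring
  have hder := Real.iteratedDeriv_fourier (f := fC) (N := n) (n := n)
    (fun k _ => integrable_pow_fC k) le_rfl
  set w₀ : ℝ := -(x / π) with hw₀
  have hcomp : ContDiff ℝ (n : ℕ∞) (fun w : ℝ => fC (-π * w)) :=
    (fC_contDiff.of_le le_top).comp (contDiff_const.mul contDiff_id)
  have hL : iteratedDeriv n (𝓕 fC) w₀
      = (Real.sqrt π : ℂ) * (((-π : ℝ) ^ n : ℝ) : ℂ) * D := by
    rw [fourier_fC]
    have hsm : (fun w : ℝ => (Real.sqrt π : ℂ) • fC (-π * w))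
        = (Real.sqrt π : ℂ) • (fun w : ℝ => fC (-π * w)) := rfl
    rw [hsm, ← iteratedDerivWithin_univ,
      iteratedDerivWithin_const_smul (f := fun w : ℝ => fC (-π * w))
        (Set.mem_univ w₀) uniqueDiffOn_univ ((Real.sqrt π : ℂ)) hcomp.contDiffWithinAt,
      iteratedDerivWithin_univ,
      iteratedDeriv_comp_const_smul (fC_contDiff.of_le le_top) (-π)]
    have hx : -π * w₀ = x := by rw [hw₀]; field_simp
    simp only [hx]
    rw [iteratedDeriv_fC, ← hD]
    simp only [smul_eq_mul, Complex.real_smul]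
    push_cast
    ring
  have hR : iteratedDeriv n (𝓕 fC) w₀ = (-2 * (π:ℂ) * Complex.I) ^ n * K := by
    rw [hder, Real.fourier_real_eq_integral_exp_smul, hK,
      ← MeasureTheory.integral_const_mul]
    refine integral_congr_ae (Filter.Eventually.of_forall fun t => ?_)
    simp only [smul_eq_mul]
    have harg : (-2 * π * t * w₀ : ℝ) = (2 * t * x : ℝ) := by
      rw [hw₀]; field_simp
    rw [harg]
    push_cast
    ring
  have key : (-2 * Complex.I) ^ n * ((π:ℂ)) ^ n * K
      = (Real.sqrt π : ℂ) * ((-1 : ℂ) ^ n * ((π:ℂ)) ^ n) * D := by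
    have expand : (-2 * (π:ℂ) * Complex.I) ^ n = (-2 * Complex.I) ^ n * (π:ℂ) ^ n := by
      rw [← mul_pow]; ring_nf
    have expand2 : (((-π : ℝ) ^ n : ℝ) : ℂ) = (-1 : ℂ) ^ n * (π : ℂ) ^ n := by
      push_cast
      rw [← neg_one_mul, mul_pow]
    have := hR.symm.trans hL
    rw [expand, expand2] at this
    linear_combination this
  have keyJ : (-2 * Complex.I) ^ n * J
      = (Real.sqrt π : ℂ) * ((-1 : ℂ) ^ n * Complex.exp ((x:ℂ)^2) * D) := by
    have hπn : ((π:ℂ)) ^ n ≠ 0 := pow_ne_zero _ hπC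
    apply mul_right_cancel₀ hπn
    rw [claim1]
    linear_combination Complex.exp ((x:ℂ)^2) * key
  have hsqrt : ((Real.sqrt π : ℝ) : ℂ) ≠ 0 := by
    exact_mod_cast Real.sqrt_ne_zero'.mpr Real.pi_pos
  rw [eq_div_iff hsqrt, keyJ]
  push_cast
  ring


open Real in
/-- Integral representation `H_n(x) = (-2i)ⁿ π^{-1/2} ∫_ℝ e^{-(t-ix)²} tⁿ dt`. -/
theorem physHermite_integral_repr (n : ℕ) (x : ℝ) :
    (physHermite n x : ℂ) =
      (-2 * Complex.I) ^ n *
        (∫ t : ℝ, Complex.exp (-((t : ℂ) - Complex.I * x) ^ 2) * (t : ℂ) ^ n) /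
        (Real.sqrt π : ℝ) := by
  rw [physHermite]
  exact physHermite_integral_repr' n x
end

section
/- The reordering identity for double series: for complex z, w, t with |t| = 1 and an absolutely summable sequence (a_j), Σ_{n=0}^∞ Σ_{k=0}^∞ a_{n+2k}(z^{n+k}w^k tⁿ + z^k w^{n+k} t^{−n} − δ_{n0} z^k w^k) = Σ_{h=0}^∞ Σ_{k=0}^∞ a_{h+k}(tz)^h(t^{−1}w)^k. -/
/-- Reordering identity for double series: for an absolutely summable family and
`|t| = 1`, `Σ_{n,k} a_{n+2k}(z^{n+k}w^k tⁿ + z^k w^{n+k} t^{-n} - δ_{n0} z^k w^k)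
  = Σ_{h,k} a_{h+k}(tz)^h(t⁻¹w)^k`. -/
theorem double_series_reordering (a : ℕ → ℂ) (z w t : ℂ) (ht : ‖t‖ = 1)
    (hsum : Summable fun p : ℕ × ℕ =>
      ‖a (p.1 + 2 * p.2)‖ * ‖z‖ ^ (p.1 + p.2) * ‖w‖ ^ p.2)
    (hsum' : Summable fun p : ℕ × ℕ => ‖a (p.1 + p.2)‖ * ‖z‖ ^ p.1 * ‖w‖ ^ p.2) :
    ∑' p : ℕ × ℕ,
        a (p.1 + 2 * p.2) *
          (z ^ (p.1 + p.2) * w ^ p.2 * t ^ p.1 + z ^ p.2 * w ^ (p.1 + p.2) * t⁻¹ ^ p.1 -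
            (if p.1 = 0 then 1 else 0) * z ^ p.2 * w ^ p.2) =
      ∑' p : ℕ × ℕ, a (p.1 + p.2) * (t * z) ^ p.1 * (t⁻¹ * w) ^ p.2 := by
  have ht0 : t ≠ 0 := by
    intro h; rw [h] at ht; simp at ht
  set f : ℕ × ℕ → ℂ := fun p => a (p.1 + p.2) * (t * z) ^ p.1 * (t⁻¹ * w) ^ p.2 with hfdef
  have hnormt : ‖t‖ = 1 := ht
  have hnormf : ∀ p : ℕ × ℕ, ‖f p‖ = ‖a (p.1 + p.2)‖ * ‖z‖ ^ p.1 * ‖w‖ ^ p.2 := by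
    intro p
    simp [hfdef, norm_mul, norm_pow, norm_inv, hnormt]
  have hfsum : Summable f := by
    apply Summable.of_norm
    simpa only [hnormf] using hsum'
  -- the two injections
  set i1 : ℕ × ℕ → ℕ × ℕ := fun p => (p.1 + p.2, p.2) with hi1def
  set i2 : ℕ × ℕ → ℕ × ℕ := fun p => (p.2, p.1 + 1 + p.2) with hi2def
  have hi1 : Function.Injective i1 := by
    rintro ⟨n, k⟩ ⟨m, l⟩ h
    simp only [hi1def, Prod.mk.injEq] at h
    obtain ⟨h1, h2⟩ := h
    subst h2
    exact Prod.ext (by omega) rfl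
  have hi2 : Function.Injective i2 := by
    rintro ⟨n, k⟩ ⟨m, l⟩ h
    simp only [hi2def, Prod.mk.injEq] at h
    obtain ⟨h1, h2⟩ := h
    subst h1
    exact Prod.ext (by omega) rfl
  set G : ℕ × ℕ → ℂ := fun p => if p.1 = 0 then 0 else f (p.2, p.1 + p.2) with hGdef
  -- summability of the pieces
  have hs1 : Summable (fun p => f (i1 p)) := by
    apply Summable.of_norm
    have : ∀ p : ℕ × ℕ, ‖f (i1 p)‖ = ‖a (p.1 + 2 * p.2)‖ * ‖z‖ ^ (p.1 + p.2) * ‖w‖ ^ p.2 := by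
      rintro ⟨n, k⟩
      rw [hnormf]
      simp only [hi1def]
      rw [show n + k + k = n + 2 * k by omega]
    simpa only [this] using hsum
  have hs2' : Summable (fun p : ℕ × ℕ => f (p.2, p.1 + p.2)) :=
    hfsum.comp_injective (i := fun p : ℕ × ℕ => (p.2, p.1 + p.2)) (by
      rintro ⟨n, k⟩ ⟨m, l⟩ h
      simp only [Prod.mk.injEq] at h
      obtain ⟨h1, h2⟩ := h
      subst h1
      exact Prod.ext (by omega) rfl)
  have hsG : Summable G := by
    have hGind : G = Set.indicator {p : ℕ × ℕ | p.1 ≠ 0} (fun p => f (p.2, p.1 + p.2)) := by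
      funext p
      by_cases h : p.1 = 0 <;> simp [hGdef, Set.indicator, h]
    rw [hGind]
    exact hs2'.indicator _
  -- pointwise identity on the left
  have hpt : ∀ p : ℕ × ℕ,
      a (p.1 + 2 * p.2) *
          (z ^ (p.1 + p.2) * w ^ p.2 * t ^ p.1 + z ^ p.2 * w ^ (p.1 + p.2) * t⁻¹ ^ p.1 -
            (if p.1 = 0 then 1 else 0) * z ^ p.2 * w ^ p.2) = f (i1 p) + G p := by
    rintro ⟨n, k⟩
    simp only [hGdef, hi1def, hfdef]
    have e1 : n + k + k = n + 2 * k := by omega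
    have e2 : k + (n + k) = n + 2 * k := by omega
    rw [e1, e2]
    by_cases h : n = 0
    · subst h
      simp only [zero_add, pow_zero, mul_one, one_mul, if_pos rfl, add_zero]
      rw [mul_pow, mul_pow, inv_pow]
      field_simp
      simp only [↓reduceIte]
      ring
    · rw [if_neg h, if_neg h]
      rw [mul_pow, mul_pow, mul_pow, mul_pow, inv_pow, inv_pow]
      field_simp
      have hc : t ^ n * t ^ (k * 2) * t⁻¹ ^ n * t⁻¹ ^ k = t ^ k := by
        rw [inv_pow, inv_pow]
        field_simp
        ring
      linear_combination (-(a (n + 2 * k) * z ^ k * w ^ n * w ^ k)) * hc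
  -- rewrite LHS
  rw [tsum_congr hpt, Summable.tsum_add hs1 hsG]
  -- split RHS over the set {p | p.2 ≤ p.1} and its complement
  set s : Set (ℕ × ℕ) := {p | p.2 ≤ p.1} with hsdef
  have hr1 : Set.range i1 = s := by
    ext p
    constructor
    · rintro ⟨q, rfl⟩
      simp [hi1def, hsdef]
    · intro hp
      simp only [hsdef, Set.mem_setOf_eq] at hp
      refine ⟨(p.1 - p.2, p.2), ?_⟩
      simp only [hi1def]
      exact Prod.ext (by simp; omega) rfl
  have hr2 : Set.range i2 = sᶜ := by
    ext p
    constructor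
    · rintro ⟨q, rfl⟩
      simp only [hi2def, hsdef, Set.mem_compl_iff, Set.mem_setOf_eq]
      omega
    · intro hp
      simp only [hsdef, Set.mem_compl_iff, Set.mem_setOf_eq, not_le] at hp
      refine ⟨(p.2 - p.1 - 1, p.1), ?_⟩
      simp only [hi2def]
      exact Prod.ext rfl (by simp; omega)
  have hsplit : ∑' p, f p = ∑' p, s.indicator f p + ∑' p, sᶜ.indicator f p := by
    rw [← Summable.tsum_add (hfsum.indicator s) (hfsum.indicator sᶜ)]
    conv_lhs => rw [← Set.indicator_self_add_compl s f]
    exact tsum_congr fun b => rfl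
  have h1 : ∑' p, s.indicator f p = ∑' p, f (i1 p) := by
    rw [← hi1.tsum_eq (f := s.indicator f) (by rw [hr1]; exact Set.support_indicator_subset)]
    apply tsum_congr
    intro p
    rw [Set.indicator_of_mem]
    rw [← hr1]
    exact ⟨p, rfl⟩
  have h2 : ∑' p, sᶜ.indicator f p = ∑' p, f (i2 p) := by
    rw [← hi2.tsum_eq (f := sᶜ.indicator f) (by rw [hr2]; exact Set.support_indicator_subset)]
    apply tsum_congr
    intro p
    rw [Set.indicator_of_mem]
    rw [← hr2]
    exact ⟨p, rfl⟩
  have hG2 : ∑' p, G p = ∑' p, f (i2 p) := by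
    have hj : Function.Injective (fun p : ℕ × ℕ => ((p.1 + 1, p.2) : ℕ × ℕ)) := by
      rintro ⟨n, k⟩ ⟨m, l⟩ h
      simp only [Prod.mk.injEq] at h
      exact Prod.ext (by omega) h.2
    have hsupp : Function.support G ⊆ Set.range (fun p : ℕ × ℕ => ((p.1 + 1, p.2) : ℕ × ℕ)) := by
      intro p hp
      have hp1 : p.1 ≠ 0 := by
        intro h0
        apply hp
        simp [hGdef, h0]
      refine ⟨(p.1 - 1, p.2), ?_⟩
      exact Prod.ext (by simp; omega) rfl
    rw [← hj.tsum_eq (f := G) hsupp]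
    apply tsum_congr
    intro p
    simp [hGdef, hi2def]
  rw [hsplit, h1, h2, hG2]
end
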